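/- arXiv:0901.0382 — 4 statements merged into one kernel-verified Lean document; each statement's English description precedes it below -/
import Mathlib

section
/- Let U^u(t, ω) be the restriction of a linear cocycle to finite-dimensional invariant unstable subspaces E^u(ω), invertible along the flow, satisfying ‖U^u(t,ω)‖ ≤ H_ω^Λ e^{Λ t} for t ≥ 0 (Λ > |λ₊|), and lim_{t→∞} (1/t) log ‖U^u(t,ω)x‖ = λ' ≥ λ₊ for every unit vector x ∈ E^u(ω). Fix ε > 0 and define 1/K^u(ω) := sup_{t ≥ 0} e^{(λ₊ - ε)t}/‖U^u(t,ω)‖. Then K^u(ω) ∈ (0, ∞) is well-defined, measurable, and tempered from below; moreover ‖U^u(t, ω)‖ ≥ K^u(ω) e^{(λ₊ - ε)t} for all t ≥ 0. -/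
open MeasureTheory Filter

theorem stmt_9 {Ω H : Type*} [MeasurableSpace Ω] (P : Measure Ω) [IsProbabilityMeasure P]
    [NormedAddCommGroup H] [InnerProductSpace ℝ H] [CompleteSpace H]
    [TopologicalSpace.SeparableSpace H]
    (θ : ℝ → Ω → Ω)
    (hθ_meas : Measurable fun p : ℝ × Ω => θ p.1 p.2)
    (hθ0 : θ 0 = id)
    (hθ_flow : ∀ s t : ℝ, θ t ∘ θ s = θ (t + s))
    (hθ_pres : ∀ t : ℝ, MeasurePreserving (θ t) P P)
    (U : ℝ → Ω → H →L[ℝ] H)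
    (E : Ω → Submodule ℝ H) (hE_fd : ∀ ω, FiniteDimensional ℝ (E ω))
    (hE_inv : ∀ t : ℝ, 0 ≤ t → ∀ ω, Submodule.map (U t ω : H →ₗ[ℝ] H) (E ω) = E (θ t ω))
    -- N is the operator norm of the restriction of U to the unstable subspaces
    (N : ℝ → Ω → ℝ)
    (hN : ∀ t ω, N t ω = sSup ((fun x : H => ‖U t ω x‖) '' {x | x ∈ E ω ∧ ‖x‖ ≤ 1}))
    (hN_pos : ∀ ω, ∀ t : ℝ, 0 ≤ t → 0 < N t ω)
    (hN_cont : ∀ ω, ContinuousOn (fun t => N t ω) (Set.Ici 0))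
    (hN_meas : ∀ t : ℝ, Measurable fun ω => N t ω)
    (hN_sub : ∀ ω, ∀ s t : ℝ, 0 ≤ s → 0 ≤ t → N (t + s) ω ≤ N t (θ s ω) * N s ω)
    (Λ lamPlus lam' ε : ℝ) (hε : 0 < ε) (hΛ : |lamPlus| < Λ) (hlam : lamPlus ≤ lam')
    (Hc : Ω → ℝ) (hHc_pos : ∀ ω, 0 < Hc ω)
    (hbound : ∀ ω, ∀ t : ℝ, 0 ≤ t → N t ω ≤ Hc ω * Real.exp (Λ * t))
    (hlim : ∀ ω, ∀ x : H, x ∈ E ω → ‖x‖ = 1 →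
      Tendsto (fun t : ℝ => Real.log ‖U t ω x‖ / t) atTop (nhds lam')) :
    (∀ ω, BddAbove ((fun t : ℝ => Real.exp ((lamPlus - ε) * t) / N t ω) '' Set.Ici 0) ∧
      0 < sSup ((fun t : ℝ => Real.exp ((lamPlus - ε) * t) / N t ω) '' Set.Ici 0)) ∧
    Measurable (fun ω =>
      sSup ((fun t : ℝ => Real.exp ((lamPlus - ε) * t) / N t ω) '' Set.Ici 0)) ∧
    (∀ ω, ∀ t : ℝ, 0 ≤ t →
      (sSup ((fun t : ℝ => Real.exp ((lamPlus - ε) * t) / N t ω) '' Set.Ici 0))⁻¹ *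
        Real.exp ((lamPlus - ε) * t) ≤ N t ω) ∧
    (∃ S : Set Ω, MeasurableSet S ∧ P Sᶜ = 0 ∧ (∀ t : ℝ, ∀ ω ∈ S, θ t ω ∈ S) ∧
      ∀ ω ∈ S, Tendsto (fun t : ℝ => max (Real.log
        (sSup ((fun s : ℝ => Real.exp ((lamPlus - ε) * s) / N s (θ t ω)) '' Set.Ici 0))) 0 / t)
        atTop (nhds 0)) := by
  classical
  -- basic facts about the image sets
  have himg_ne : ∀ (t : ℝ) (ω : Ω),
      ((fun x : H => ‖U t ω x‖) '' {x | x ∈ E ω ∧ ‖x‖ ≤ 1}).Nonempty :=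
    fun t ω => ⟨‖U t ω 0‖, ⟨0, ⟨(E ω).zero_mem, by simp⟩, rfl⟩⟩
  have himg_bdd : ∀ (t : ℝ) (ω : Ω),
      BddAbove ((fun x : H => ‖U t ω x‖) '' {x | x ∈ E ω ∧ ‖x‖ ≤ 1}) := by
    intro t ω
    refine ⟨‖U t ω‖, ?_⟩
    rintro y ⟨x, ⟨_, hx⟩, rfl⟩
    calc ‖U t ω x‖ ≤ ‖U t ω‖ * ‖x‖ := (U t ω).le_opNorm x
      _ ≤ ‖U t ω‖ * 1 := mul_le_mul_of_nonneg_left hx (norm_nonneg _)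
      _ = ‖U t ω‖ := mul_one _
  have hN_ge : ∀ (t : ℝ) (ω : Ω) (x : H), x ∈ E ω → ‖x‖ ≤ 1 → ‖U t ω x‖ ≤ N t ω := by
    intro t ω x h1 h2
    rw [hN]
    exact le_csSup (himg_bdd t ω) ⟨x, ⟨h1, h2⟩, rfl⟩
  -- the key two–sided eventual estimate for N
  have key : ∀ (ω : Ω) (δ : ℝ), 0 < δ → ∀ᶠ t in atTop,
      Real.exp ((lam' - δ) * t) ≤ N t ω ∧ N t ω ≤ Real.exp ((lam' + δ) * t) := by
    intro ω δ hδ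
    haveI := hE_fd ω
    set d := Module.finrank ℝ (E ω) with hd_def
    set b := stdOrthonormalBasis ℝ (E ω) with hb_def
    have hbmem : ∀ i, ((b i : H) ∈ E ω) := fun i => (b i).2
    have hbnorm : ∀ i, ‖(b i : H)‖ = 1 := by
      intro i
      have := b.orthonormal.1 i
      rwa [Submodule.coe_norm] at this
    have hupper : ∀ t : ℝ, N t ω ≤ ∑ i, ‖U t ω (b i : H)‖ := by
      intro t
      rw [hN]
      refine csSup_le (himg_ne t ω) ?_
      rintro y ⟨x, ⟨hx1, hx2⟩, rfl⟩
      have hxe : ((⟨x, hx1⟩ : E ω) : H) = x := rfl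
      have hsum := b.sum_repr (⟨x, hx1⟩ : E ω)
      have hrw : U t ω x = ∑ i, (b.repr ⟨x, hx1⟩ i) • U t ω (b i : H) := by
        conv_lhs => rw [← hxe, ← hsum]
        rw [Submodule.coe_sum, map_sum]
        congr 1
        ext i
        rw [Submodule.coe_smul, _root_.map_smul]
      show ‖U t ω x‖ ≤ ∑ i, ‖U t ω (b i : H)‖
      rw [hrw]
      calc ‖∑ i, (b.repr ⟨x, hx1⟩ i) • U t ω (b i : H)‖
          ≤ ∑ i, ‖(b.repr ⟨x, hx1⟩ i) • U t ω (b i : H)‖ := norm_sum_le _ _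
        _ ≤ ∑ i, ‖U t ω (b i : H)‖ := by
            refine Finset.sum_le_sum fun i _ => ?_
            rw [norm_smul]
            have hle : ‖b.repr ⟨x, hx1⟩ i‖ ≤ 1 := by
              rw [b.repr_apply_apply]
              calc ‖(inner ℝ (b i) (⟨x, hx1⟩ : E ω) : ℝ)‖
                  ≤ ‖b i‖ * ‖(⟨x, hx1⟩ : E ω)‖ := norm_inner_le_norm _ _
                _ ≤ 1 * 1 := by
                    have h1 : ‖b i‖ = 1 := b.orthonormal.1 i
                    have h2 : ‖(⟨x, hx1⟩ : E ω)‖ ≤ 1 := by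
                      rw [← Submodule.norm_coe]; exact hx2
                    rw [h1]; exact mul_le_mul_of_nonneg_left h2 zero_le_one
                _ = 1 := mul_one 1
            calc ‖b.repr ⟨x, hx1⟩ i‖ * ‖U t ω (b i : H)‖
                ≤ 1 * ‖U t ω (b i : H)‖ :=
                  mul_le_mul_of_nonneg_right hle (norm_nonneg _)
              _ = ‖U t ω (b i : H)‖ := one_mul _
    have hd : 0 < d := by
      rcases Nat.eq_zero_or_pos d with h0 | h
      · exfalso
        have h1 := hupper 0
        have h2 : (∑ i : Fin d, ‖U 0 ω (b i : H)‖) = 0 :=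
          Finset.sum_eq_zero fun i _ => absurd i.2 (by omega)
        rw [h2] at h1
        exact absurd (hN_pos ω 0 le_rfl) (not_lt.2 h1)
      · exact h
    have hev : ∀ i : Fin d, ∀ᶠ t in atTop,
        lam' - δ < Real.log ‖U t ω (b i : H)‖ / t ∧
        Real.log ‖U t ω (b i : H)‖ / t < lam' + δ / 2 := by
      intro i
      have h := hlim ω (b i : H) (hbmem i) (hbnorm i)
      exact (h.eventually_const_lt (by linarith)).and (h.eventually_lt_const (by linarith))
    filter_upwards [eventually_all.2 hev, eventually_ge_atTop (1 : ℝ),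
      eventually_ge_atTop (2 * Real.log d / δ)] with t hti ht1 htd
    have ht0 : (0 : ℝ) < t := lt_of_lt_of_le one_pos ht1
    constructor
    · -- lower bound
      have hex : ∃ i : Fin d, ‖U t ω (b i : H)‖ ≠ 0 := by
        by_contra hall
        push_neg at hall
        have h1 := hupper t
        have h2 : (∑ i : Fin d, ‖U t ω (b i : H)‖) = 0 :=
          Finset.sum_eq_zero fun i _ => hall i
        rw [h2] at h1
        exact absurd (hN_pos ω t ht0.le) (not_lt.2 h1)
      obtain ⟨i, hi⟩ := hex
      have hpos : 0 < ‖U t ω (b i : H)‖ := lt_of_le_of_ne (norm_nonneg _) (Ne.symm hi)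
      have hlog : (lam' - δ) * t < Real.log ‖U t ω (b i : H)‖ := by
        have h := (hti i).1
        rwa [lt_div_iff₀ ht0] at h
      calc Real.exp ((lam' - δ) * t)
          ≤ Real.exp (Real.log ‖U t ω (b i : H)‖) := Real.exp_le_exp.2 hlog.le
        _ = ‖U t ω (b i : H)‖ := Real.exp_log hpos
        _ ≤ N t ω := hN_ge t ω _ (hbmem i) (le_of_eq (hbnorm i))
    · -- upper bound
      have hone : ∀ i : Fin d, ‖U t ω (b i : H)‖ ≤ Real.exp ((lam' + δ / 2) * t) := by
        intro i
        have h2 := (hti i).2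
        rw [div_lt_iff₀ ht0] at h2
        rcases eq_or_lt_of_le (norm_nonneg (U t ω (b i : H))) with h0 | h0
        · rw [← h0]; exact (Real.exp_pos _).le
        · calc ‖U t ω (b i : H)‖ = Real.exp (Real.log ‖U t ω (b i : H)‖) :=
              (Real.exp_log h0).symm
            _ ≤ Real.exp ((lam' + δ / 2) * t) := Real.exp_le_exp.2 h2.le
      have hdexp : (d : ℝ) ≤ Real.exp (δ / 2 * t) := by
        have hlogd : Real.log d ≤ δ / 2 * t := by
          rw [div_le_iff₀ hδ] at htd
          nlinarith
        calc (d : ℝ) = Real.exp (Real.log d) :=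
            (Real.exp_log (by exact_mod_cast hd)).symm
          _ ≤ Real.exp (δ / 2 * t) := Real.exp_le_exp.2 hlogd
      calc N t ω ≤ ∑ i, ‖U t ω (b i : H)‖ := hupper t
        _ ≤ ∑ _i : Fin d, Real.exp ((lam' + δ / 2) * t) :=
            Finset.sum_le_sum fun i _ => hone i
        _ = (d : ℝ) * Real.exp ((lam' + δ / 2) * t) := by
            rw [Finset.sum_const, Finset.card_univ, Fintype.card_fin, nsmul_eq_mul]
        _ ≤ Real.exp (δ / 2 * t) * Real.exp ((lam' + δ / 2) * t) :=
            mul_le_mul_of_nonneg_right hdexp (Real.exp_pos _).le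
        _ = Real.exp ((lam' + δ) * t) := by rw [← Real.exp_add]; ring_nf
  -- continuity of the function t ↦ exp((lamPlus - ε) t) / N t ω on Ici 0
  have hf_cont : ∀ ω : Ω, ContinuousOn
      (fun t : ℝ => Real.exp ((lamPlus - ε) * t) / N t ω) (Set.Ici 0) := by
    intro ω
    exact ((Real.continuous_exp.comp (continuous_const.mul continuous_id)).continuousOn).div
      (hN_cont ω) (fun t ht => (hN_pos ω t ht).ne')
  -- Part 1
  have part1 : ∀ ω, BddAbove ((fun t : ℝ => Real.exp ((lamPlus - ε) * t) / N t ω) '' Set.Ici 0) ∧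
      0 < sSup ((fun t : ℝ => Real.exp ((lamPlus - ε) * t) / N t ω) '' Set.Ici 0) := by
    intro ω
    have hbdd : BddAbove
        ((fun t : ℝ => Real.exp ((lamPlus - ε) * t) / N t ω) '' Set.Ici 0) := by
      obtain ⟨T, hT⟩ := eventually_atTop.1 (key ω (ε / 2) (half_pos hε))
      set T' := max T 0 with hT'
      obtain ⟨M, hM⟩ := (isCompact_Icc (a := (0 : ℝ)) (b := T')).bddAbove_image
        ((hf_cont ω).mono Set.Icc_subset_Ici_self)
      refine ⟨max M 1, ?_⟩
      rintro y ⟨t, ht, rfl⟩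
      rcases le_total t T' with h | h
      · exact le_max_of_le_left (hM ⟨t, ⟨ht, h⟩, rfl⟩)
      · refine le_max_of_le_right ?_
        have hTt : T ≤ t := le_trans (le_max_left _ _) h
        have h1 : Real.exp ((lam' - ε / 2) * t) ≤ N t ω := (hT t hTt).1
        have ht0 : (0 : ℝ) ≤ t := le_trans (le_max_right _ _) h
        have hNpos := hN_pos ω t ht0
        rw [div_le_one hNpos]
        calc Real.exp ((lamPlus - ε) * t) ≤ Real.exp ((lam' - ε / 2) * t) := by
              apply Real.exp_le_exp.2
              exact mul_le_mul_of_nonneg_right (by linarith) ht0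
          _ ≤ N t ω := h1
    refine ⟨hbdd, lt_of_lt_of_le ?_ (le_csSup hbdd ⟨0, Set.self_mem_Ici, rfl⟩)⟩
    exact div_pos (Real.exp_pos _) (hN_pos ω 0 le_rfl)
  -- Part 3
  have part3 : ∀ ω, ∀ t : ℝ, 0 ≤ t →
      (sSup ((fun t : ℝ => Real.exp ((lamPlus - ε) * t) / N t ω) '' Set.Ici 0))⁻¹ *
        Real.exp ((lamPlus - ε) * t) ≤ N t ω := by
    intro ω t ht
    have h1 : Real.exp ((lamPlus - ε) * t) / N t ω ≤
        sSup ((fun t : ℝ => Real.exp ((lamPlus - ε) * t) / N t ω) '' Set.Ici 0) :=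
      le_csSup (part1 ω).1 ⟨t, ht, rfl⟩
    have hNp := hN_pos ω t ht
    have hSp := (part1 ω).2
    rw [div_le_iff₀ hNp] at h1
    rw [inv_mul_le_iff₀ hSp]
    exact h1
  -- Part 2 : measurability
  have part2 : Measurable (fun ω =>
      sSup ((fun t : ℝ => Real.exp ((lamPlus - ε) * t) / N t ω) '' Set.Ici 0)) := by
    have heq : ∀ ω, sSup ((fun t : ℝ => Real.exp ((lamPlus - ε) * t) / N t ω) '' Set.Ici 0)
        = ⨆ q : ℚ, Real.exp ((lamPlus - ε) * |(q : ℝ)|) / N (|(q : ℝ)|) ω := by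
      intro ω
      have hbdd := (part1 ω).1
      have hrange_bdd : BddAbove (Set.range fun q : ℚ =>
          Real.exp ((lamPlus - ε) * |(q : ℝ)|) / N (|(q : ℝ)|) ω) := by
        obtain ⟨M, hM⟩ := hbdd
        refine ⟨M, ?_⟩
        rintro y ⟨q, rfl⟩
        exact hM ⟨|(q : ℝ)|, Set.mem_Ici.2 (abs_nonneg _), rfl⟩
      apply le_antisymm
      · refine csSup_le (Set.Nonempty.image _ Set.nonempty_Ici) ?_
        rintro y ⟨t, ht, rfl⟩
        have htc : (t : ℝ) ∈ closure (Set.range ((↑) : ℚ → ℝ)) :=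
          Rat.denseRange_cast t
        obtain ⟨u, hu_mem, hu_tend⟩ := mem_closure_iff_seq_limit.1 htc
        choose q hq using hu_mem
        have habs : Tendsto (fun n => |u n|) atTop (nhds t) := by
          have h := hu_tend.abs
          rwa [abs_of_nonneg ht] at h
        have htend : Tendsto (fun n => Real.exp ((lamPlus - ε) * |u n|) / N (|u n|) ω)
            atTop (nhds (Real.exp ((lamPlus - ε) * t) / N t ω)) := by
          have hcw := (hf_cont ω) t ht
          refine hcw.tendsto.comp ?_
          rw [tendsto_nhdsWithin_iff]
          exact ⟨habs, Filter.Eventually.of_forall fun n => Set.mem_Ici.2 (abs_nonneg _)⟩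
        refine le_of_tendsto htend (Filter.Eventually.of_forall fun n => ?_)
        have h1 : Real.exp ((lamPlus - ε) * |u n|) / N (|u n|) ω =
            Real.exp ((lamPlus - ε) * |((q n : ℝ))|) / N (|((q n : ℝ))|) ω := by
          rw [hq n]
        rw [h1]
        exact le_ciSup hrange_bdd (q n)
      · exact ciSup_le fun q => le_csSup hbdd ⟨|(q : ℝ)|, Set.mem_Ici.2 (abs_nonneg _), rfl⟩
    have hfun : (fun ω => sSup ((fun t : ℝ =>
        Real.exp ((lamPlus - ε) * t) / N t ω) '' Set.Ici 0)) =
        fun ω => ⨆ q : ℚ, Real.exp ((lamPlus - ε) * |(q : ℝ)|) / N (|(q : ℝ)|) ω :=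
      funext heq
    rw [hfun]
    exact Measurable.iSup fun q => measurable_const.div (hN_meas _)
  refine ⟨part1, part2, part3, Set.univ, MeasurableSet.univ, by simp,
    fun t ω _ => Set.mem_univ _, ?_⟩
  -- Part 4
  intro ω _
  rw [tendsto_order]
  constructor
  · intro a ha
    filter_upwards [eventually_gt_atTop (0 : ℝ)] with t ht
    have h0 : 0 ≤ max (Real.log
        (sSup ((fun s : ℝ => Real.exp ((lamPlus - ε) * s) / N s (θ t ω)) '' Set.Ici 0))) 0 / t :=
      div_nonneg (le_max_right _ _) ht.le
    linarith
  · intro a ha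
    set δ := min (a / 4) (ε / 2) with hδdef
    have hδ : 0 < δ := lt_min (by linarith) (by linarith)
    have hδε : δ ≤ ε := le_trans (min_le_right _ _) (by linarith)
    obtain ⟨T, hT⟩ := eventually_atTop.1 (key ω δ hδ)
    filter_upwards [eventually_ge_atTop (max T 1)] with t ht
    have ht1 : (1 : ℝ) ≤ t := le_trans (le_max_right _ _) ht
    have htT : T ≤ t := le_trans (le_max_left _ _) ht
    have ht0 : (0 : ℝ) < t := lt_of_lt_of_le one_pos ht1
    have hG : sSup ((fun s : ℝ => Real.exp ((lamPlus - ε) * s) / N s (θ t ω)) '' Set.Ici 0)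
        ≤ Real.exp (2 * δ * t) := by
      refine csSup_le (Set.Nonempty.image _ Set.nonempty_Ici) ?_
      rintro y ⟨s, hs, rfl⟩
      have hs0 : (0 : ℝ) ≤ s := hs
      have hNS : 0 < N s (θ t ω) := hN_pos _ s hs0
      rw [div_le_iff₀ hNS]
      have h1 : Real.exp ((lam' - δ) * (s + t)) ≤ N (s + t) ω :=
        (hT (s + t) (by linarith)).1
      have h2 : N t ω ≤ Real.exp ((lam' + δ) * t) := (hT t htT).2
      have h3 : N (s + t) ω ≤ N s (θ t ω) * N t ω := hN_sub ω t s ht0.le hs0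
      have h4 : Real.exp ((lam' - δ) * (s + t)) ≤ N s (θ t ω) * Real.exp ((lam' + δ) * t) :=
        h1.trans (h3.trans (mul_le_mul_of_nonneg_left h2 hNS.le))
      have h5 : Real.exp ((lam' - δ) * (s + t) - (lam' + δ) * t) ≤ N s (θ t ω) := by
        rw [Real.exp_sub, div_le_iff₀ (Real.exp_pos _)]
        exact h4
      calc Real.exp ((lamPlus - ε) * s)
          ≤ Real.exp (2 * δ * t) * Real.exp ((lam' - δ) * (s + t) - (lam' + δ) * t) := by
            rw [← Real.exp_add]
            apply Real.exp_le_exp.2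
            have hexp : 2 * δ * t + ((lam' - δ) * (s + t) - (lam' + δ) * t)
                = (lam' - δ) * s := by ring
            rw [hexp]
            exact mul_le_mul_of_nonneg_right (by linarith) hs0
        _ ≤ Real.exp (2 * δ * t) * N s (θ t ω) :=
            mul_le_mul_of_nonneg_left h5 (Real.exp_pos _).le
    have hGpos := (part1 (θ t ω)).2
    have hlog : Real.log
        (sSup ((fun s : ℝ => Real.exp ((lamPlus - ε) * s) / N s (θ t ω)) '' Set.Ici 0))
        ≤ 2 * δ * t := by
      rw [Real.log_le_iff_le_exp hGpos]
      exact hG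
    have hmax : max (Real.log
        (sSup ((fun s : ℝ => Real.exp ((lamPlus - ε) * s) / N s (θ t ω)) '' Set.Ici 0))) 0
        ≤ 2 * δ * t := max_le hlog (by positivity)
    have hdiv : max (Real.log
        (sSup ((fun s : ℝ => Real.exp ((lamPlus - ε) * s) / N s (θ t ω)) '' Set.Ici 0))) 0 / t
        ≤ 2 * δ := (div_le_iff₀ ht0).2 hmax
    have h2δ : 2 * δ < a := by
      have := min_le_left (a / 4) (ε / 2)
      rw [hδdef]
      linarith [min_le_left (a / 4) (ε / 2)]
    linarith
end

section
/- Let ν > 0 and let ω ∈ C₀(ℝ, ℝ) be a continuous path with ω(0) = 0 satisfying lim_{t→±∞} ω(t)/t = 0. Then z*(θ_t ω) := −ν ∫_{−∞}^0 e^{ντ} ω(t+τ) dτ + ω(t) is well-defined for all t ∈ ℝ, (t, ω-path fixed) t ↦ z*(θ_t ω) is continuous, and it solves the integral form of dz = −ν z dt + dω, namely z*(θ_t ω) = z*(ω) − ν ∫₀^t z*(θ_s ω) ds + ω(t) for all t ∈ ℝ. Moreover lim_{t→±∞} |z*(θ_t ω)|/|t| = 0. -/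
open MeasureTheory Filter

open Set

/-- integrability of `exp (c τ)` on `Iic 0`. -/
lemma aux_intexp {c : ℝ} (hc : 0 < c) :
    IntegrableOn (fun τ : ℝ => Real.exp (c * τ)) (Set.Iic 0) := by
  have h := exp_neg_integrableOn_Ioi 0 hc
  have hiff := (Measure.measurePreserving_neg (volume : Measure ℝ)).integrableOn_comp_preimage
      (MeasurableEquiv.neg ℝ).measurableEmbedding (f := fun x : ℝ => Real.exp (-c * x))
      (s := Ioi 0)
  rw [← hiff] at h
  have hs : (Neg.neg ⁻¹' Ioi (0:ℝ)) = Iio 0 := by ext x; simp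
  rw [hs] at h
  have h2 : IntegrableOn (fun τ : ℝ => Real.exp (c * τ)) (Iio 0) := by
    apply h.congr_fun ?_ measurableSet_Iio
    intro x _; simp [Function.comp, neg_mul, mul_neg]
  rwa [integrableOn_Iic_iff_integrableOn_Iio]

/-- integrability of `exp (c τ) * (4 + |τ|)` on `Iic 0`. -/
lemma aux_intexpw {c : ℝ} (hc : 0 < c) :
    IntegrableOn (fun τ : ℝ => Real.exp (c * τ) * (4 + |τ|)) (Set.Iic 0) := by
  have hc2 : 0 < c / 2 := by linarith
  apply Integrable.mono' ((aux_intexp hc2).const_mul (4 + 2 / c))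
  · exact (((Real.continuous_exp.comp (continuous_const.mul continuous_id)).mul
      (continuous_const.add continuous_abs))).aestronglyMeasurable
  · rw [ae_restrict_iff' measurableSet_Iic]
    filter_upwards with τ hτ
    simp only [Set.mem_Iic] at hτ
    have h1 : Real.exp (c * τ) ≤ Real.exp (c / 2 * τ) :=
      Real.exp_le_exp.mpr (by nlinarith)
    have h2 : Real.exp (c / 2 * τ) * |τ| ≤ 2 / c := by
      have hx : -(c / 2 * τ) ≤ Real.exp (-(c / 2 * τ)) :=
        le_trans (by linarith [Real.add_one_le_exp (-(c / 2 * τ))]) le_rfl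
      have habs : |τ| = -τ := abs_of_nonpos hτ
      have hepos := Real.exp_pos (c / 2 * τ)
      have hrw : Real.exp (-(c / 2 * τ)) = (Real.exp (c / 2 * τ))⁻¹ := Real.exp_neg _
      rw [hrw] at hx
      rw [habs]
      rw [le_div_iff₀ hc]
      have := (mul_le_mul_of_nonneg_left hx hepos.le)
      rw [mul_inv_cancel₀ hepos.ne'] at this
      nlinarith
    have h3 : 0 ≤ Real.exp (c * τ) := (Real.exp_pos _).le
    have h4 : 0 ≤ |τ| := abs_nonneg τ
    have h5 : Real.exp (c * τ) * |τ| ≤ 2 / c * Real.exp (c / 2 * τ) := by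
      have hsq : Real.exp (c * τ) = Real.exp (c / 2 * τ) * Real.exp (c / 2 * τ) := by
        rw [← Real.exp_add]; ring_nf
      nlinarith [mul_le_mul_of_nonneg_left h2 (Real.exp_pos (c / 2 * τ)).le,
        Real.exp_pos (c / 2 * τ)]
    rw [Real.norm_eq_abs, abs_of_nonneg (by positivity)]
    nlinarith [Real.exp_pos (c/2 * τ)]

/-- a continuous sublinear function admits a linear bound. -/
lemma aux_linbd {w : ℝ → ℝ} (hw_cont : Continuous w)
    (h1 : Tendsto (fun t => w t / t) atTop (nhds 0))
    (h2 : Tendsto (fun t => w t / t) atBot (nhds 0)) :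
    ∃ C : ℝ, 0 < C ∧ ∀ s, |w s| ≤ C * (1 + |s|) := by
  have e1 : ∀ᶠ t in atTop, ‖w t / t‖ < 1 :=
    (NormedAddCommGroup.tendsto_nhds_zero.mp h1) 1 one_pos
  have e2 : ∀ᶠ t in atBot, ‖w t / t‖ < 1 :=
    (NormedAddCommGroup.tendsto_nhds_zero.mp h2) 1 one_pos
  obtain ⟨A, hA⟩ := eventually_atTop.mp e1
  obtain ⟨B, hB⟩ := eventually_atBot.mp e2
  obtain ⟨M, hM⟩ := (isCompact_Icc (a := min B (-1)) (b := max A 1)).exists_bound_of_continuousOn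
    hw_cont.continuousOn
  have hCpos : (0:ℝ) < |M| + 1 := by positivity
  refine ⟨|M| + 1, hCpos, fun s => ?_⟩
  have hmn : (0:ℝ) ≤ (|M| + 1) * |s| := by positivity
  rcases le_or_gt s (max A 1) with hs | hs
  · rcases le_or_gt (min B (-1)) s with hs' | hs'
    · have := hM s ⟨hs', hs⟩
      rw [Real.norm_eq_abs] at this
      have h1s : (1:ℝ) ≤ 1 + |s| := by linarith [abs_nonneg s]
      nlinarith [abs_nonneg s, le_abs_self M, hmn]
    · -- s < min B (-1) ≤ B, so atBot bound applies
      have hsB : s ≤ B := le_of_lt (lt_of_lt_of_le hs' (min_le_left _ _))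
      have hsneg : s < 0 := lt_of_lt_of_le (lt_of_lt_of_le hs' (min_le_right _ _)) (by norm_num)
      have := hB s hsB
      rw [Real.norm_eq_abs, abs_div] at this
      have hst : |w s| ≤ |s| := by
        rw [div_lt_one (abs_pos.mpr hsneg.ne)] at this
        linarith
      nlinarith [abs_nonneg s, abs_nonneg M, hmn]
  · have hsA : A ≤ s := le_of_lt (lt_of_le_of_lt (le_max_left _ _) hs)
    have hspos : 0 < s := lt_of_lt_of_le (by norm_num : (0:ℝ) < 1) (le_of_lt (lt_of_le_of_lt (le_max_right _ _) hs))
    have := hA s hsA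
    rw [Real.norm_eq_abs, abs_div] at this
    have hst : |w s| ≤ |s| := by
      rw [div_lt_one (abs_pos.mpr hspos.ne')] at this
      linarith
    nlinarith [abs_nonneg s, abs_nonneg M, hmn]

noncomputable def Gfun (ν : ℝ) (w : ℝ → ℝ) (t : ℝ) : ℝ :=
  ∫ σ in Set.Iic t, Real.exp (ν * σ) * w σ

lemma aux_hint1 {ν C : ℝ} (hν : 0 < ν) {w : ℝ → ℝ} (hw_cont : Continuous w)
    (hC : ∀ s, |w s| ≤ C * (1 + |s|)) (hC0 : 0 < C) (t : ℝ) :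
    IntegrableOn (fun τ => Real.exp (ν * τ) * w (t + τ)) (Set.Iic 0) := by
  apply Integrable.mono' ((aux_intexpw hν).const_mul (C * (1 + |t|)))
  · exact ((Real.continuous_exp.comp (continuous_const.mul continuous_id)).mul
      (hw_cont.comp (continuous_const.add continuous_id))).aestronglyMeasurable
  · filter_upwards with τ
    rw [Real.norm_eq_abs, abs_mul, abs_of_pos (Real.exp_pos _)]
    have h1 : |w (t + τ)| ≤ C * (1 + |t + τ|) := hC (t + τ)
    have h2 : |t + τ| ≤ |t| + |τ| := abs_add_le t τ
    have h3 := Real.exp_pos (ν * τ)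
    have h4 : C * (1 + |t + τ|) ≤ C * (1 + |t|) * (4 + |τ|) := by
      nlinarith [abs_nonneg t, abs_nonneg τ, mul_nonneg (abs_nonneg t) (abs_nonneg τ)]
    nlinarith [mul_le_mul_of_nonneg_left h1 h3.le, mul_le_mul_of_nonneg_left h4 h3.le]

lemma aux_hGint {ν C : ℝ} (hν : 0 < ν) {w : ℝ → ℝ} (hw_cont : Continuous w)
    (hC : ∀ s, |w s| ≤ C * (1 + |s|)) (hC0 : 0 < C) (t : ℝ) :
    IntegrableOn (fun σ => Real.exp (ν * σ) * w σ) (Set.Iic t) := by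
  have h : IntegrableOn (fun τ => Real.exp (ν * t) * (Real.exp (ν * τ) * w (t + τ)))
      (Set.Iic 0) := (aux_hint1 hν hw_cont hC hC0 t).const_mul (Real.exp (ν * t))
  have h3 : IntegrableOn ((fun σ => Real.exp (ν * σ) * w σ) ∘ (fun τ => t + τ)) (Set.Iic 0) := by
    apply h.congr_fun ?_ measurableSet_Iic
    intro x _
    simp only [Function.comp_apply]
    rw [← mul_assoc, ← Real.exp_add, mul_add]
  have hiff := (measurePreserving_add_left (volume : Measure ℝ) t).integrableOn_comp_preimage
      (MeasurableEquiv.addLeft t).measurableEmbedding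
      (f := fun σ => Real.exp (ν * σ) * w σ) (s := Set.Iic t)
  have hpre : ((fun τ => t + τ) ⁻¹' Set.Iic t) = Set.Iic 0 := by
    ext x; simp
  rw [← hiff]
  show IntegrableOn _ ((fun τ => t + τ) ⁻¹' Set.Iic t) _
  rwa [hpre]

lemma aux_hsub {ν C : ℝ} (hν : 0 < ν) {w : ℝ → ℝ} (hw_cont : Continuous w)
    (hC : ∀ s, |w s| ≤ C * (1 + |s|)) (hC0 : 0 < C) (t : ℝ) :
    ∫ τ in Set.Iic (0:ℝ), Real.exp (ν * τ) * w (t + τ)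
      = Real.exp (-(ν * t)) * Gfun ν w t := by
  have h1 : (fun τ => Real.exp (ν * τ) * w (t + τ))
      = fun τ => Real.exp (-(ν * t)) * (Real.exp (ν * (t + τ)) * w (t + τ)) := by
    funext τ
    rw [← mul_assoc, ← Real.exp_add]
    congr 2
    ring
  rw [h1, MeasureTheory.integral_const_mul]
  congr 1
  have h2 := (measurePreserving_add_left (volume : Measure ℝ) t).setIntegral_preimage_emb
      (MeasurableEquiv.addLeft t).measurableEmbedding
      (fun σ => Real.exp (ν * σ) * w σ) (Set.Iic t)
  have hpre : ((fun τ => t + τ) ⁻¹' Set.Iic t) = Set.Iic 0 := by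
    ext x; simp
  rw [hpre] at h2
  exact h2

lemma aux_hone {ν : ℝ} (hν : 0 < ν) :
    ∫ τ in Set.Iic (0:ℝ), ν * Real.exp (ν * τ) = 1 := by
  have hderiv : ∀ x ∈ Set.Iic (0:ℝ), HasDerivAt (fun τ => Real.exp (ν * τ))
      (ν * Real.exp (ν * x)) x := by
    intro x _
    have := ((hasDerivAt_id x).const_mul ν).exp
    simpa [mul_comm] using this
  have hint : IntegrableOn (fun x => ν * Real.exp (ν * x)) (Set.Iic 0) :=
    (aux_intexp hν).const_mul ν
  have htend : Tendsto (fun τ => Real.exp (ν * τ)) atBot (nhds 0) :=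
    Real.tendsto_exp_atBot.comp (Tendsto.const_mul_atBot hν tendsto_id)
  have := integral_Iic_of_hasDerivAt_of_tendsto' hderiv hint htend
  simpa using this

lemma aux_hGderiv {ν C : ℝ} (hν : 0 < ν) {w : ℝ → ℝ} (hw_cont : Continuous w)
    (hC : ∀ s, |w s| ≤ C * (1 + |s|)) (hC0 : 0 < C) (t : ℝ) :
    HasDerivAt (Gfun ν w) (Real.exp (ν * t) * w t) t := by
  have hf : Continuous (fun σ => Real.exp (ν * σ) * w σ) :=
    (Real.continuous_exp.comp (continuous_const.mul continuous_id)).mul hw_cont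
  have hGrw : Gfun ν w = fun u => Gfun ν w 0 + ∫ s in (0:ℝ)..u, Real.exp (ν * s) * w s := by
    funext u
    have := intervalIntegral.integral_Iic_sub_Iic (aux_hGint hν hw_cont hC hC0 0)
      (aux_hGint hν hw_cont hC hC0 u)
    simp only [Gfun]
    linarith
  rw [hGrw]
  exact (intervalIntegral.integral_hasDerivAt_right (hf.intervalIntegrable 0 t)
    (hf.stronglyMeasurableAtFilter volume (nhds t)) hf.continuousAt).const_add _

lemma aux_part4 {ν C : ℝ} (hν : 0 < ν) {w : ℝ → ℝ} (hw_cont : Continuous w)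
    (hC : ∀ s, |w s| ≤ C * (1 + |s|)) (hC0 : 0 < C)
    {l : Filter ℝ} [l.IsCountablyGenerated]
    (hbig : ∀ᶠ t in l, 1 ≤ |t|)
    (hw1 : Tendsto (fun t => w t / t) l (nhds 0))
    (hshift : ∀ τ : ℝ, Tendsto (fun t => w (t + τ) / t) l (nhds 0)) :
    Tendsto (fun t : ℝ =>
        |(-ν * (∫ τ in Set.Iic (0:ℝ), Real.exp (ν * τ) * w (t + τ)) + w t)| / |t|)
      l (nhds 0) := by
  have hz2 : ∀ t : ℝ, -ν * (∫ τ in Set.Iic (0:ℝ), Real.exp (ν * τ) * w (t + τ)) + w t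
      = ∫ τ in Set.Iic (0:ℝ), ν * Real.exp (ν * τ) * (w t - w (t + τ)) := by
    intro t
    have hIa : IntegrableOn (fun τ => w t * (ν * Real.exp (ν * τ))) (Set.Iic 0) :=
      (((aux_intexp hν).const_mul ν).const_mul (w t))
    have hIb : IntegrableOn (fun τ => ν * (Real.exp (ν * τ) * w (t + τ))) (Set.Iic 0) :=
      (aux_hint1 hν hw_cont hC hC0 t).const_mul ν
    have hrw : (fun τ => ν * Real.exp (ν * τ) * (w t - w (t + τ)))
        = fun τ => w t * (ν * Real.exp (ν * τ)) - ν * (Real.exp (ν * τ) * w (t + τ)) := by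
      funext τ; ring
    have hint0 : ν * ∫ τ in Set.Iic (0:ℝ), Real.exp (ν * τ) = 1 := by
      rw [← MeasureTheory.integral_const_mul]; exact aux_hone hν
    rw [hrw, integral_sub hIa hIb, integral_const_mul, integral_const_mul, integral_const_mul]
    linear_combination (-(w t)) * hint0
  have heq : (fun t : ℝ =>
        |(-ν * (∫ τ in Set.Iic (0:ℝ), Real.exp (ν * τ) * w (t + τ)) + w t)| / |t|)
      = fun t : ℝ => |∫ τ in Set.Iic (0:ℝ), ν * Real.exp (ν * τ) * (w t - w (t + τ)) / t| := by
    funext t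
    rw [hz2 t, ← abs_div, ← integral_div]
  rw [heq]
  have hDCT : Tendsto (fun t : ℝ => ∫ τ in Set.Iic (0:ℝ),
      ν * Real.exp (ν * τ) * (w t - w (t + τ)) / t) l
      (nhds (∫ _ in Set.Iic (0:ℝ), (0:ℝ))) := by
    apply tendsto_integral_filter_of_dominated_convergence
      (bound := fun τ => ν * C * (Real.exp (ν * τ) * (4 + |τ|)))
    · filter_upwards with t
      exact (((continuous_const.mul (Real.continuous_exp.comp
        (continuous_const.mul continuous_id))).mul
        (continuous_const.sub (hw_cont.comp (continuous_const.add continuous_id)))).div_const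
        t).aestronglyMeasurable
    · filter_upwards [hbig] with t ht
      filter_upwards with τ
      rw [Real.norm_eq_abs, abs_div, abs_mul, abs_mul, abs_of_pos hν,
        abs_of_pos (Real.exp_pos _)]
      have htpos : (0:ℝ) < |t| := lt_of_lt_of_le one_pos ht
      rw [div_le_iff₀ htpos]
      have hd : |w t - w (t + τ)| ≤ C * (4 + |τ|) * |t| := by
        have h1 := hC t
        have h2 := hC (t + τ)
        have h3 : |t + τ| ≤ |t| + |τ| := abs_add_le t τ
        have h4 : |w t - w (t + τ)| ≤ |w t| + |w (t + τ)| := abs_sub _ _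
        nlinarith [abs_nonneg τ, abs_nonneg t,
          mul_nonneg (sub_nonneg.mpr ht) (abs_nonneg τ),
          mul_nonneg hC0.le (mul_nonneg (sub_nonneg.mpr ht) (abs_nonneg τ)),
          mul_nonneg hC0.le (sub_nonneg.mpr ht)]
      calc ν * Real.exp (ν * τ) * |w t - w (t + τ)|
          ≤ ν * Real.exp (ν * τ) * (C * (4 + |τ|) * |t|) :=
            mul_le_mul_of_nonneg_left hd (by positivity)
        _ = ν * C * (Real.exp (ν * τ) * (4 + |τ|)) * |t| := by ring
    · exact (aux_intexpw hν).const_mul (ν * C)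
    · filter_upwards with τ
      have h0 : Tendsto (fun t => w t / t - w (t + τ) / t) l (nhds (0 - 0)) :=
        hw1.sub (hshift τ)
      have h1 := h0.const_mul (ν * Real.exp (ν * τ))
      have h2 : Tendsto (fun t => ν * Real.exp (ν * τ) * (w t / t - w (t + τ) / t)) l
          (nhds 0) := by simpa using h1
      exact Tendsto.congr (fun t => by ring) h2
  rw [integral_zero] at hDCT
  have := (continuous_abs.tendsto 0).comp hDCT
  simpa [Function.comp_def] using this

lemma aux_shift_atTop {w : ℝ → ℝ} (hw0 : w 0 = 0)
    (h1 : Tendsto (fun t => w t / t) atTop (nhds 0)) (τ : ℝ) :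
    Tendsto (fun t => w (t + τ) / t) atTop (nhds 0) := by
  have ha : Tendsto (fun t : ℝ => w (t + τ) / (t + τ)) atTop (nhds 0) :=
    h1.comp (tendsto_atTop_add_const_right atTop τ tendsto_id)
  have hb : Tendsto (fun t : ℝ => (t + τ) / t) atTop (nhds 1) := by
    have h : Tendsto (fun t : ℝ => 1 + τ * t⁻¹) atTop (nhds (1 + τ * 0)) :=
      tendsto_const_nhds.add (tendsto_inv_atTop_zero.const_mul τ)
    apply Tendsto.congr' ?_ (by simpa using h)
    filter_upwards [eventually_ne_atTop (0:ℝ)] with t ht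
    field_simp
  have hmul := ha.mul hb
  apply Tendsto.congr' ?_ (by simpa using hmul)
  filter_upwards [eventually_ne_atTop (0:ℝ)] with t ht
  rcases eq_or_ne (t + τ) 0 with h | h
  · simp [h, hw0]
  · field_simp

lemma aux_shift_atBot {w : ℝ → ℝ} (hw0 : w 0 = 0)
    (h1 : Tendsto (fun t => w t / t) atBot (nhds 0)) (τ : ℝ) :
    Tendsto (fun t => w (t + τ) / t) atBot (nhds 0) := by
  have ha : Tendsto (fun t : ℝ => w (t + τ) / (t + τ)) atBot (nhds 0) :=
    h1.comp (tendsto_atBot_add_const_right atBot τ tendsto_id)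
  have hinv : Tendsto (fun t : ℝ => t⁻¹) atBot (nhds 0) := by
    have h : Tendsto (fun t : ℝ => -(-t)⁻¹) atBot (nhds (-0)) :=
      (Tendsto.comp (tendsto_inv_atTop_zero (𝕜 := ℝ)) tendsto_neg_atBot_atTop).neg
    simpa [inv_neg] using h
  have hb : Tendsto (fun t : ℝ => (t + τ) / t) atBot (nhds 1) := by
    have h : Tendsto (fun t : ℝ => 1 + τ * t⁻¹) atBot (nhds (1 + τ * 0)) :=
      tendsto_const_nhds.add (hinv.const_mul τ)
    apply Tendsto.congr' ?_ (by simpa using h)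
    filter_upwards [eventually_ne_atBot (0:ℝ)] with t ht
    field_simp
  have hmul := ha.mul hb
  apply Tendsto.congr' ?_ (by simpa using hmul)
  filter_upwards [eventually_ne_atBot (0:ℝ)] with t ht
  rcases eq_or_ne (t + τ) 0 with h | h
  · simp [h, hw0]
  · field_simp

theorem stmt_14 (ν : ℝ) (hν : 0 < ν)
    (w : ℝ → ℝ) (hw_cont : Continuous w) (hw0 : w 0 = 0)
    (hw_sub : Tendsto (fun t => w t / t) atTop (nhds 0) ∧
      Tendsto (fun t => w t / t) atBot (nhds 0)) :
    -- the integrals defining z*(θ_t ω) converge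
    (∀ t : ℝ, IntegrableOn (fun τ => Real.exp (ν * τ) * w (t + τ)) (Set.Iic 0)) ∧
    -- t ↦ z*(θ_t ω) is continuous
    Continuous (fun t => -ν * (∫ τ in Set.Iic (0:ℝ), Real.exp (ν * τ) * w (t + τ)) + w t) ∧
    -- it solves the integral form of dz = -ν z dt + dω
    (∀ t : ℝ,
      -ν * (∫ τ in Set.Iic (0:ℝ), Real.exp (ν * τ) * w (t + τ)) + w t =
        (-ν * ∫ τ in Set.Iic (0:ℝ), Real.exp (ν * τ) * w τ)
          - ν * (∫ s in (0:ℝ)..t,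
              (-ν * (∫ τ in Set.Iic (0:ℝ), Real.exp (ν * τ) * w (s + τ)) + w s))
          + w t) ∧
    -- sublinear growth
    (Tendsto (fun t : ℝ =>
        |(-ν * (∫ τ in Set.Iic (0:ℝ), Real.exp (ν * τ) * w (t + τ)) + w t)| / |t|)
      atTop (nhds 0) ∧
     Tendsto (fun t : ℝ =>
        |(-ν * (∫ τ in Set.Iic (0:ℝ), Real.exp (ν * τ) * w (t + τ)) + w t)| / |t|)
      atBot (nhds 0)) := by
  obtain ⟨C, hC0, hC⟩ := aux_linbd hw_cont hw_sub.1 hw_sub.2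
  have hint1 := fun t => aux_hint1 hν hw_cont hC hC0 t
  have hsub := fun t => aux_hsub hν hw_cont hC hC0 t
  have hGd := fun t => aux_hGderiv hν hw_cont hC hC0 t
  have hGc : Continuous (Gfun ν w) :=
    continuous_iff_continuousAt.mpr fun t => (hGd t).continuousAt
  have hecont : Continuous (fun t : ℝ => Real.exp (-(ν * t))) :=
    Real.continuous_exp.comp (continuous_const.mul continuous_id).neg
  refine ⟨hint1, ?_, ?_, ?_, ?_⟩
  · have h : (fun t => -ν * (∫ τ in Set.Iic (0:ℝ), Real.exp (ν * τ) * w (t + τ)) + w t)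
        = fun t => -ν * (Real.exp (-(ν * t)) * Gfun ν w t) + w t := by
      funext t; rw [hsub t]
    rw [h]
    exact (continuous_const.mul (hecont.mul hGc)).add hw_cont
  · intro t
    set g : ℝ → ℝ := fun u => -ν * (Real.exp (-(ν * u)) * Gfun ν w u) with hgdef
    have hgd : ∀ u, HasDerivAt g (-ν * g u - ν * w u) u := by
      intro u
      have he : HasDerivAt (fun u : ℝ => Real.exp (-(ν * u))) (-ν * Real.exp (-(ν * u))) u := by
        have h := (((hasDerivAt_id u).const_mul ν).neg).exp
        simpa [mul_comm] using h
      have hp := (he.mul (hGd u)).const_mul (-ν)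
      have hee : Real.exp (-(ν * u)) * (Real.exp (ν * u) * w u) = w u := by
        rw [← mul_assoc, ← Real.exp_add]; simp
      convert hp using 1 <;> try rfl
      rw [mul_add, hee]
      simp only [hgdef]
      ring
    have hgcont : Continuous g :=
      continuous_const.mul (hecont.mul hGc)
    have hgint : IntervalIntegrable (fun s => -ν * g s - ν * w s) volume 0 t :=
      ((continuous_const.mul hgcont).sub (continuous_const.mul hw_cont)).intervalIntegrable 0 t
    have hftc : ∫ s in (0:ℝ)..t, (-ν * g s - ν * w s) = g t - g 0 :=
      intervalIntegral.integral_eq_sub_of_hasDerivAt (fun x _ => hgd x) hgint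
    have hrw1 : ∀ s : ℝ,
        -ν * (∫ τ in Set.Iic (0:ℝ), Real.exp (ν * τ) * w (s + τ)) + w s = g s + w s :=
      fun s => by rw [hsub s]
    rw [hrw1 t]
    have hG0 : (∫ τ in Set.Iic (0:ℝ), Real.exp (ν * τ) * w τ) = Gfun ν w 0 := rfl
    rw [hG0]
    have hIc : (∫ s in (0:ℝ)..t,
        (-ν * (∫ τ in Set.Iic (0:ℝ), Real.exp (ν * τ) * w (s + τ)) + w s))
        = ∫ s in (0:ℝ)..t, (g s + w s) :=
      intervalIntegral.integral_congr fun s _ => hrw1 s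
    rw [hIc]
    have h2 : -ν * ∫ s in (0:ℝ)..t, (g s + w s) = ∫ s in (0:ℝ)..t, (-ν * g s - ν * w s) := by
      rw [← intervalIntegral.integral_const_mul]
      exact intervalIntegral.integral_congr fun s _ => by ring
    have hg0 : g 0 = -ν * Gfun ν w 0 := by simp [hgdef]
    have h3 : -ν * ∫ s in (0:ℝ)..t, (g s + w s) = g t - g 0 := by rw [h2]; exact hftc
    rw [← hg0]
    linarith [h3]
  · apply aux_part4 hν hw_cont hC hC0 ?_ hw_sub.1 (aux_shift_atTop hw0 hw_sub.1)
    filter_upwards [eventually_ge_atTop (1:ℝ)] with t ht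
    exact le_trans ht (le_abs_self t)
  · apply aux_part4 hν hw_cont hC hC0 ?_ hw_sub.2 (aux_shift_atBot hw0 hw_sub.2)
    filter_upwards [eventually_le_atBot (-1:ℝ)] with t ht
    rw [abs_of_nonpos (by linarith)]; linarith
end

section
/- Let A be a self-adjoint operator on a separable Hilbert space H with compact resolvent, eigenvalues μ₁ ≥ μ₂ ≥ ⋯ → −∞ (for −A) and orthonormal eigenbasis {e_j}, generating the semigroup S_A(t). Let C(ω) = Σ_{j=1}^N ν_j z_j*(ω) D_j where D_j ∈ L(H) commute with A and with each other, and z_j* are real random variables over an ergodic flow θ with lim_{t→∞} (1/t)∫₀^t z_j*(θ_s ω) ds = 0 a.s. Define U(t, ω) = S_A(t) exp(∫₀^t C(θ_s ω) ds). Then for each eigenvector e_j, lim_{t→∞} (1/t) log ‖U(t, ω) e_j‖ = μ_j for ω in a set of full measure; i.e., the Lyapunov exponents of the cocycle U equal the eigenvalues μ_j of −A. -/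
open MeasureTheory Filter

lemma norm_exp_le_exp_norm' {𝔸 : Type*} [NormedRing 𝔸] [NormedAlgebra ℝ 𝔸]
    [NormOneClass 𝔸] [CompleteSpace 𝔸] (x : 𝔸) :
    ‖NormedSpace.exp x‖ ≤ Real.exp ‖x‖ := by
  have hs1 : Summable fun n : ℕ => ‖((n.factorial : ℝ))⁻¹ • x ^ n‖ :=
    NormedSpace.norm_expSeries_summable' x
  have hs2 : Summable fun n : ℕ => ((n.factorial : ℝ))⁻¹ * ‖x‖ ^ n := by
    refine (NormedSpace.norm_expSeries_summable' (𝕂 := ℝ) (‖x‖ : ℝ)).congr fun n => ?_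
    rw [norm_smul, Real.norm_eq_abs, Real.norm_eq_abs,
      abs_of_nonneg (inv_nonneg.2 (Nat.cast_nonneg _)),
      abs_of_nonneg (pow_nonneg (norm_nonneg x) n)]
  have hpow : ∀ n : ℕ, ‖x ^ n‖ ≤ ‖x‖ ^ n := by
    intro n
    cases n with
    | zero => simp
    | succ n => exact norm_pow_le' x n.succ_pos
  calc ‖NormedSpace.exp x‖ = ‖∑' n : ℕ, ((n.factorial : ℝ))⁻¹ • x ^ n‖ := by
        rw [NormedSpace.exp_eq_tsum ℝ]
    _ ≤ ∑' n : ℕ, ‖((n.factorial : ℝ))⁻¹ • x ^ n‖ := norm_tsum_le_tsum_norm hs1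
    _ ≤ ∑' n : ℕ, ((n.factorial : ℝ))⁻¹ * ‖x‖ ^ n := by
        refine Summable.tsum_le_tsum (fun n => ?_) hs1 hs2
        rw [norm_smul, Real.norm_eq_abs, abs_of_nonneg (inv_nonneg.2 (Nat.cast_nonneg _))]
        exact mul_le_mul_of_nonneg_left (hpow n) (by positivity)
    _ = Real.exp ‖x‖ := by
        rw [Real.exp_eq_exp_ℝ, NormedSpace.exp_eq_tsum ℝ]
        simp [smul_eq_mul]

set_option maxHeartbeats 1000000 in
set_option synthInstance.maxHeartbeats 200000 in
theorem stmt_15 {Ω H : Type*} [MeasurableSpace Ω] (P : Measure Ω) [IsProbabilityMeasure P]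
    [NormedAddCommGroup H] [InnerProductSpace ℝ H] [CompleteSpace H]
    [TopologicalSpace.SeparableSpace H]
    (θ : ℝ → Ω → Ω)
    (hθ_meas : Measurable fun p : ℝ × Ω => θ p.1 p.2)
    (hθ0 : θ 0 = id)
    (hθ_flow : ∀ s t : ℝ, θ t ∘ θ s = θ (t + s))
    (hθ_pres : ∀ t : ℝ, MeasurePreserving (θ t) P P)
    (hθ_erg : ∀ S : Set Ω, MeasurableSet S → (∀ t : ℝ, θ t ⁻¹' S = S) → P S = 0 ∨ P S = 1)
    -- the eigen-structure of -A and its semigroup S_A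
    (e : ℕ → H) (he : Orthonormal ℝ e)
    (μ : ℕ → ℝ) (hμ_mono : Antitone μ) (hμ_lim : Tendsto μ atTop atBot)
    (SA : ℝ → H →L[ℝ] H)
    (hSA0 : SA 0 = ContinuousLinearMap.id ℝ H)
    (hSA_sem : ∀ s t : ℝ, 0 ≤ s → 0 ≤ t → SA (s + t) = (SA s).comp (SA t))
    (hSA_eig : ∀ (j : ℕ) (t : ℝ), 0 ≤ t → SA t (e j) = Real.exp (μ j * t) • e j)
    -- the perturbation C(ω) = Σ ν_j z_j*(ω) D_j with commuting bounded operators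
    (N : ℕ) (ν : Fin N → ℝ) (z : Fin N → Ω → ℝ)
    (Dop : Fin N → H →L[ℝ] H)
    (hD_comm : ∀ i j : Fin N, (Dop i).comp (Dop j) = (Dop j).comp (Dop i))
    (hDA_comm : ∀ (j : Fin N) (t : ℝ), 0 ≤ t → (SA t).comp (Dop j) = (Dop j).comp (SA t))
    (hz_meas : ∀ j, Measurable (z j))
    (hz_int : ∀ (j : Fin N) (ω : Ω) (t : ℝ),
      IntervalIntegrable (fun s => z j (θ s ω)) volume 0 t)
    (hz_avg : ∃ S : Set Ω, MeasurableSet S ∧ P Sᶜ = 0 ∧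
      ∀ ω ∈ S, ∀ j : Fin N,
        Tendsto (fun t : ℝ => (∫ s in (0:ℝ)..t, z j (θ s ω)) / t) atTop (nhds 0)) :
    -- the Lyapunov exponents of U(t,ω) = S_A(t) exp(∫₀ᵗ C(θ_s ω) ds) are the μ_j
    ∃ S : Set Ω, MeasurableSet S ∧ P Sᶜ = 0 ∧
      ∀ ω ∈ S, ∀ j : ℕ,
        Tendsto (fun t : ℝ =>
          Real.log ‖(SA t).comp (NormedSpace.exp
            (∑ i : Fin N, (ν i * ∫ s in (0:ℝ)..t, z i (θ s ω)) • Dop i)) (e j)‖ / t)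
          atTop (nhds (μ j)) := by
  have hne : e 0 ≠ 0 := fun h => by simpa [h] using he.1 0
  haveI : Nontrivial H := ⟨⟨e 0, 0, hne⟩⟩
  obtain ⟨S, hSmeas, hScompl, hS⟩ := hz_avg
  refine ⟨S, hSmeas, hScompl, fun ω hω j => ?_⟩
  set B : ℝ → H →L[ℝ] H :=
    fun t => ∑ i : Fin N, (ν i * ∫ s in (0:ℝ)..t, z i (θ s ω)) • Dop i with hB
  have hej : ‖e j‖ = 1 := he.1 j
  -- lower and upper bounds for ‖exp (B t) (e j)‖
  have hinv : ∀ t : ℝ, NormedSpace.exp (-(B t)) * NormedSpace.exp (B t) = 1 := by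
    intro t
    letI : NormedAlgebra ℚ (H →L[ℝ] H) := NormedAlgebra.restrictScalars ℚ ℝ (H →L[ℝ] H)
    rw [← NormedSpace.exp_add_of_commute (Commute.refl (B t)).neg_left]
    simp
  have hupper : ∀ t : ℝ, ‖NormedSpace.exp (B t) (e j)‖ ≤ Real.exp ‖B t‖ := by
    intro t
    calc ‖NormedSpace.exp (B t) (e j)‖ ≤ ‖NormedSpace.exp (B t)‖ * ‖e j‖ :=
          (NormedSpace.exp (B t)).le_opNorm _
      _ ≤ Real.exp ‖B t‖ := by rw [hej, mul_one]; exact norm_exp_le_exp_norm' _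
  have hlower : ∀ t : ℝ, Real.exp (-‖B t‖) ≤ ‖NormedSpace.exp (B t) (e j)‖ := by
    intro t
    have h1 : (1 : ℝ) ≤ Real.exp ‖B t‖ * ‖NormedSpace.exp (B t) (e j)‖ := by
      calc (1 : ℝ) = ‖e j‖ := hej.symm
        _ = ‖(NormedSpace.exp (-(B t)) * NormedSpace.exp (B t)) (e j)‖ := by
            rw [hinv t]; rfl
        _ = ‖NormedSpace.exp (-(B t)) (NormedSpace.exp (B t) (e j))‖ := rfl
        _ ≤ ‖NormedSpace.exp (-(B t))‖ * ‖NormedSpace.exp (B t) (e j)‖ :=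
            (NormedSpace.exp (-(B t))).le_opNorm _
        _ ≤ Real.exp ‖B t‖ * ‖NormedSpace.exp (B t) (e j)‖ := by
            exact mul_le_mul_of_nonneg_right
              (by simpa [norm_neg] using norm_exp_le_exp_norm' (-(B t))) (norm_nonneg _)
    calc Real.exp (-‖B t‖) = Real.exp (-‖B t‖) * 1 := (mul_one _).symm
      _ ≤ Real.exp (-‖B t‖) * (Real.exp ‖B t‖ * ‖NormedSpace.exp (B t) (e j)‖) := by
          exact mul_le_mul_of_nonneg_left h1 (Real.exp_pos _).le
      _ = ‖NormedSpace.exp (B t) (e j)‖ := by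
          rw [← mul_assoc, ← Real.exp_add]; simp
  have hpos : ∀ t : ℝ, 0 < ‖NormedSpace.exp (B t) (e j)‖ :=
    fun t => lt_of_lt_of_le (Real.exp_pos _) (hlower t)
  -- commutation and eigenvector computation
  have hkey : ∀ t : ℝ, 0 ≤ t →
      (SA t).comp (NormedSpace.exp (B t)) (e j)
        = Real.exp (μ j * t) • NormedSpace.exp (B t) (e j) := by
    intro t ht
    have hc : Commute (SA t) (B t) := by
      refine Commute.sum_right _ _ _ fun i _ => ?_
      have hci : Commute (SA t) (Dop i) := by
        show SA t * Dop i = Dop i * SA t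
        rw [ContinuousLinearMap.mul_def, ContinuousLinearMap.mul_def]
        exact hDA_comm i t ht
      exact hci.smul_right _
    have hce : Commute (SA t) (NormedSpace.exp (B t)) := hc.exp_right
    have hcomp : (SA t).comp (NormedSpace.exp (B t)) =
        (NormedSpace.exp (B t)).comp (SA t) := by
      rw [← ContinuousLinearMap.mul_def, ← ContinuousLinearMap.mul_def]
      exact hce.eq
    rw [hcomp]
    rw [ContinuousLinearMap.comp_apply, hSA_eig j t ht, _root_.map_smul]
  -- log computation
  have hlog : ∀ t : ℝ, 0 ≤ t →
      Real.log ‖(SA t).comp (NormedSpace.exp (B t)) (e j)‖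
        = μ j * t + Real.log ‖NormedSpace.exp (B t) (e j)‖ := by
    intro t ht
    rw [hkey t ht, norm_smul, Real.norm_eq_abs, abs_of_pos (Real.exp_pos _),
      Real.log_mul (Real.exp_ne_zero _) (ne_of_gt (hpos t)), Real.log_exp]
  -- |log ‖exp (B t) (e j)‖| ≤ ‖B t‖
  have habs : ∀ t : ℝ, |Real.log ‖NormedSpace.exp (B t) (e j)‖| ≤ ‖B t‖ := by
    intro t
    rw [abs_le]
    constructor
    · have := Real.log_le_log (Real.exp_pos _) (hlower t)
      rwa [Real.log_exp] at this
    · have := Real.log_le_log (hpos t) (hupper t)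
      rwa [Real.log_exp] at this
  -- ‖B t‖ / t → 0
  have hBt : Tendsto (fun t : ℝ => ‖B t‖ / t) atTop (nhds 0) := by
    have hub : ∀ᶠ t : ℝ in atTop, ‖B t‖ / t ≤
        ∑ i : Fin N, |ν i| * ‖Dop i‖ * |(∫ s in (0:ℝ)..t, z i (θ s ω)) / t| := by
      filter_upwards [eventually_gt_atTop (0 : ℝ)] with t ht
      rw [div_le_iff₀ ht]
      calc ‖B t‖ ≤ ∑ i : Fin N, ‖(ν i * ∫ s in (0:ℝ)..t, z i (θ s ω)) • Dop i‖ :=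
            norm_sum_le _ _
        _ = ∑ i : Fin N, |ν i| * ‖Dop i‖ * |∫ s in (0:ℝ)..t, z i (θ s ω)| := by
            refine Finset.sum_congr rfl fun i _ => ?_
            rw [norm_smul (ν i * ∫ s in (0:ℝ)..t, z i (θ s ω)) (Dop i),
              Real.norm_eq_abs, abs_mul]; ring
        _ = (∑ i : Fin N, |ν i| * ‖Dop i‖ * |(∫ s in (0:ℝ)..t, z i (θ s ω)) / t|) * t := by
            rw [Finset.sum_mul]
            refine Finset.sum_congr rfl fun i _ => ?_
            rw [abs_div, abs_of_pos ht]
            field_simp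
    have hsum : Tendsto (fun t : ℝ =>
        ∑ i : Fin N, |ν i| * ‖Dop i‖ * |(∫ s in (0:ℝ)..t, z i (θ s ω)) / t|)
        atTop (nhds 0) := by
      have h0 : Tendsto (fun t : ℝ =>
          ∑ i : Fin N, |ν i| * ‖Dop i‖ * |(∫ s in (0:ℝ)..t, z i (θ s ω)) / t|)
          atTop (nhds (∑ i : Fin N, |ν i| * ‖Dop i‖ * |(0:ℝ)|)) := by
        refine tendsto_finset_sum _ fun i _ => ?_
        exact tendsto_const_nhds.mul ((hS ω hω i).abs)
      simpa using h0
    refine squeeze_zero' ?_ hub hsum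
    filter_upwards [eventually_gt_atTop (0 : ℝ)] with t ht
    exact div_nonneg (norm_nonneg _) ht.le
  -- conclude
  have hlog2 : Tendsto (fun t : ℝ => Real.log ‖NormedSpace.exp (B t) (e j)‖ / t)
      atTop (nhds 0) := by
    refine squeeze_zero_norm' ?_ hBt
    filter_upwards [eventually_ge_atTop (1 : ℝ)] with t ht
    have ht0 : (0 : ℝ) < t := by linarith
    rw [Real.norm_eq_abs, abs_div, abs_of_pos ht0]
    gcongr
    exact habs t
  have hfinal : Tendsto (fun t : ℝ => μ j + Real.log ‖NormedSpace.exp (B t) (e j)‖ / t)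
      atTop (nhds (μ j)) := by
    simpa using tendsto_const_nhds.add hlog2
  refine hfinal.congr' ?_
  filter_upwards [eventually_gt_atTop (0 : ℝ)] with t ht
  rw [hlog t ht.le, add_div, mul_div_assoc, div_self ht.ne', mul_one]
end

section
/- In the setting of the previous statement, fix ε > 0, let μ_s < 0 < μ_u be consecutive eigenvalues, and let Π^s be the spectral projection onto span{e_i : μ_i ≤ μ_s}. Suppose for each j there is T(ε) > 0 with |∫₀^t z_j*(θ_s ω) ds| ≤ (ε/δ) t for all t ≥ T(ε), where δ = Σ_j |ν_j| ‖D_j‖. Then for all t ≥ 0: ‖exp(∫₀^t C(θ_s ω) ds) S_A(t) Π^s‖ ≤ K(ω) e^{(μ_s + ε)t}, where K(ω) = exp( Σ_{j=1}^N |ν_j| ‖D_j‖ max_{r ∈ [0, T(ε)]} |∫₀^r z_j*(θ_s ω) ds| ). Moreover, if each process satisfies lim_{t→∞}(1/t)∫₀^t |z_j*(θ_s ω)| ds = E|z_j*| < ∞, then K is tempered: lim_{t→∞} (log⁺ K(θ_t ω))/t = 0. -/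
open MeasureTheory Filter

/-- norm of operator exponential is bounded by exponential of the norm -/
lemma aux_norm_exp_le {𝔸 : Type*} [NormedRing 𝔸] [NormedAlgebra ℝ 𝔸] [CompleteSpace 𝔸]
    [NormOneClass 𝔸] (x : 𝔸) : ‖NormedSpace.exp x‖ ≤ Real.exp ‖x‖ := by
  rw [NormedSpace.exp_eq_tsum ℝ]
  refine (norm_tsum_le_tsum_norm (NormedSpace.norm_expSeries_summable' x)).trans ?_
  rw [Real.exp_eq_exp_ℝ, NormedSpace.exp_eq_tsum_div]
  refine Summable.tsum_le_tsum ?_ (NormedSpace.norm_expSeries_summable' x)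
    (Real.summable_pow_div_factorial ‖x‖)
  intro n
  rw [norm_smul, norm_inv, Real.norm_natCast, div_eq_inv_mul]
  exact mul_le_mul_of_nonneg_left (norm_pow_le x n) (by positivity)

lemma aux_prim_cont {g : ℝ → ℝ} (hint : ∀ t : ℝ, IntervalIntegrable g volume 0 t) :
    Continuous fun r : ℝ => |∫ s in (0:ℝ)..r, g s| :=
  (intervalIntegral.continuous_primitive (fun a b => (hint a).symm.trans (hint b)) 0).abs

lemma aux_le_sSup {g : ℝ → ℝ} (hint : ∀ t : ℝ, IntervalIntegrable g volume 0 t) {T t : ℝ}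
    (ht : t ∈ Set.Icc (0:ℝ) T) :
    |∫ s in (0:ℝ)..t, g s| ≤ sSup ((fun r => |∫ s in (0:ℝ)..r, g s|) '' Set.Icc 0 T) :=
  le_csSup (isCompact_Icc.image (aux_prim_cont hint)).bddAbove ⟨t, ht, rfl⟩

lemma aux_sSup_nonneg {g : ℝ → ℝ} (hint : ∀ t : ℝ, IntervalIntegrable g volume 0 t) {T : ℝ}
    (hT : 0 ≤ T) :
    0 ≤ sSup ((fun r => |∫ s in (0:ℝ)..r, g s|) '' Set.Icc 0 T) := by
  have := aux_le_sSup hint (show (0:ℝ) ∈ Set.Icc (0:ℝ) T from ⟨le_refl 0, hT⟩)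
  simpa [intervalIntegral.integral_same] using this

theorem stmt_16 {Ω H : Type*} [MeasurableSpace Ω] (P : Measure Ω) [IsProbabilityMeasure P]
    [NormedAddCommGroup H] [InnerProductSpace ℝ H] [CompleteSpace H]
    [TopologicalSpace.SeparableSpace H]
    (θ : ℝ → Ω → Ω)
    (hθ_meas : Measurable fun p : ℝ × Ω => θ p.1 p.2)
    (hθ0 : θ 0 = id)
    (hθ_flow : ∀ s t : ℝ, θ t ∘ θ s = θ (t + s))
    (hθ_pres : ∀ t : ℝ, MeasurePreserving (θ t) P P)
    (SA : ℝ → H →L[ℝ] H) (Ps : H →L[ℝ] H) (hPs : Ps.comp Ps = Ps)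
    (μs μu : ℝ) (hμs : μs < 0) (hμu : 0 < μu)
    (hSA_bd : ∀ t : ℝ, 0 ≤ t → ‖(SA t).comp Ps‖ ≤ Real.exp (μs * t))
    (N : ℕ) (ν : Fin N → ℝ) (z : Fin N → Ω → ℝ) (Dop : Fin N → H →L[ℝ] H)
    (hz_meas : ∀ j, Measurable (z j))
    (hz_int : ∀ (j : Fin N) (ω : Ω) (t : ℝ),
      IntervalIntegrable (fun s => z j (θ s ω)) volume 0 t)
    (ε T : ℝ) (hε : 0 < ε) (hT : 0 < T)
    (S : Set Ω) (hS_meas : MeasurableSet S) (hS_full : P Sᶜ = 0)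
    (hS_inv : ∀ t : ℝ, ∀ ω ∈ S, θ t ω ∈ S)
    (hδ : ∀ ω ∈ S, ∀ j : Fin N, ∀ t : ℝ, T ≤ t →
      |∫ s in (0:ℝ)..t, z j (θ s ω)| ≤ ε / (∑ i : Fin N, |ν i| * ‖Dop i‖) * t) :
    -- the exponential bound with tempered constant K(ω)
    (∀ ω ∈ S, ∀ t : ℝ, 0 ≤ t →
      ‖(NormedSpace.exp (∑ i : Fin N, (ν i * ∫ s in (0:ℝ)..t, z i (θ s ω)) • Dop i)).comp
          ((SA t).comp Ps)‖ ≤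
        Real.exp (∑ i : Fin N, |ν i| * ‖Dop i‖ *
            sSup ((fun r => |∫ s in (0:ℝ)..r, z i (θ s ω)|) '' Set.Icc 0 T)) *
          Real.exp ((μs + ε) * t)) ∧
    -- moreover, K is tempered
    ((∃ Ez : Fin N → ℝ, ∀ ω ∈ S, ∀ j : Fin N,
        Tendsto (fun t : ℝ => (∫ s in (0:ℝ)..t, |z j (θ s ω)|) / t) atTop (nhds (Ez j))) →
      ∀ ω ∈ S,
        Tendsto (fun t : ℝ => max (Real.log
            (Real.exp (∑ i : Fin N, |ν i| * ‖Dop i‖ *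
              sSup ((fun r => |∫ s in (0:ℝ)..r, z i (θ s (θ t ω))|) '' Set.Icc 0 T)))) 0 / t)
          atTop (nhds 0)) := by
  have hterm : ∀ i : Fin N, 0 ≤ |ν i| * ‖Dop i‖ := fun i =>
    mul_nonneg (abs_nonneg _) (norm_nonneg _)
  constructor
  · -- part 1
    intro ω hω t ht
    rcases subsingleton_or_nontrivial H with hss | hnt
    · have h0 : (NormedSpace.exp
          (∑ i : Fin N, (ν i * ∫ s in (0:ℝ)..t, z i (θ s ω)) • Dop i)).comp
          ((SA t).comp Ps) = 0 := by
        ext x; exact Subsingleton.elim _ _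
      rw [h0, norm_zero]
      positivity
    set δ : ℝ := ∑ i : Fin N, |ν i| * ‖Dop i‖ with hδdef
    have hδ0 : 0 ≤ δ := Finset.sum_nonneg fun i _ => hterm i
    have hM : ∀ i : Fin N,
        0 ≤ sSup ((fun r => |∫ s in (0:ℝ)..r, z i (θ s ω)|) '' Set.Icc 0 T) :=
      fun i => aux_sSup_nonneg (hz_int i ω) hT.le
    calc ‖(NormedSpace.exp
          (∑ i : Fin N, (ν i * ∫ s in (0:ℝ)..t, z i (θ s ω)) • Dop i)).comp
          ((SA t).comp Ps)‖
        ≤ ‖NormedSpace.exp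
            (∑ i : Fin N, (ν i * ∫ s in (0:ℝ)..t, z i (θ s ω)) • Dop i)‖ *
            ‖(SA t).comp Ps‖ := ContinuousLinearMap.opNorm_comp_le _ _
      _ ≤ Real.exp ‖∑ i : Fin N, (ν i * ∫ s in (0:ℝ)..t, z i (θ s ω)) • Dop i‖ *
            Real.exp (μs * t) := by
          exact mul_le_mul (aux_norm_exp_le _) (hSA_bd t ht) (norm_nonneg _)
            (Real.exp_pos _).le
      _ ≤ Real.exp (∑ i : Fin N, |ν i| * ‖Dop i‖ *
            sSup ((fun r => |∫ s in (0:ℝ)..r, z i (θ s ω)|) '' Set.Icc 0 T)) *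
            Real.exp ((μs + ε) * t) := by
          rw [← Real.exp_add, ← Real.exp_add, Real.exp_le_exp]
          have hnorm : ‖∑ i : Fin N, (ν i * ∫ s in (0:ℝ)..t, z i (θ s ω)) • Dop i‖ ≤
              ∑ i : Fin N, |ν i| * ‖Dop i‖ * |∫ s in (0:ℝ)..t, z i (θ s ω)| := by
            refine (norm_sum_le _ _).trans (Finset.sum_le_sum fun i _ => ?_)
            refine (norm_smul_le (ν i * ∫ s in (0:ℝ)..t, z i (θ s ω)) (Dop i)).trans
              (le_of_eq ?_)
            rw [Real.norm_eq_abs, abs_mul]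
            ring
          have key : ∑ i : Fin N, |ν i| * ‖Dop i‖ * |∫ s in (0:ℝ)..t, z i (θ s ω)| ≤
              (∑ i : Fin N, |ν i| * ‖Dop i‖ *
                sSup ((fun r => |∫ s in (0:ℝ)..r, z i (θ s ω)|) '' Set.Icc 0 T)) + ε * t := by
            rcases le_or_gt t T with htT | hTt
            · refine le_add_of_le_of_nonneg (Finset.sum_le_sum fun i _ => ?_)
                (mul_nonneg hε.le ht)
              exact mul_le_mul_of_nonneg_left
                (aux_le_sSup (hz_int i ω) ⟨ht, htT⟩) (hterm i)
            · have h1 : ∑ i : Fin N, |ν i| * ‖Dop i‖ * |∫ s in (0:ℝ)..t, z i (θ s ω)| ≤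
                  δ * (ε / δ * t) := by
                have : ∑ i : Fin N, |ν i| * ‖Dop i‖ * |∫ s in (0:ℝ)..t, z i (θ s ω)| ≤
                    ∑ i : Fin N, |ν i| * ‖Dop i‖ * (ε / δ * t) :=
                  Finset.sum_le_sum fun i _ =>
                    mul_le_mul_of_nonneg_left (hδ ω hω i t hTt.le) (hterm i)
                rw [← Finset.sum_mul] at this
                exact this.trans_eq (by rw [← hδdef])
              have h2 : δ * (ε / δ * t) ≤ ε * t := by
                rcases eq_or_lt_of_le hδ0 with h | h
                · rw [← h]; simpa using mul_nonneg hε.le (hT.le.trans hTt.le)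
                · rw [← mul_assoc, mul_div_cancel₀ _ h.ne']
              refine (h1.trans h2).trans ?_
              exact le_add_of_nonneg_left (Finset.sum_nonneg fun i _ =>
                mul_nonneg (hterm i) (hM i))
          linarith [hnorm, key]
  · -- part 2 : temperedness
    rintro ⟨Ez, hEz⟩ ω hω
    simp only [Real.log_exp]
    set M : Fin N → ℝ → ℝ := fun i t =>
      sSup ((fun r => |∫ s in (0:ℝ)..r, z i (θ s (θ t ω))|) '' Set.Icc 0 T) with hMdef
    have hM_nonneg : ∀ (i : Fin N) (t : ℝ), 0 ≤ M i t := fun i t =>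
      aux_sSup_nonneg (hz_int i (θ t ω)) hT.le
    have hmax : ∀ t : ℝ, max (∑ i : Fin N, |ν i| * ‖Dop i‖ * M i t) 0 =
        ∑ i : Fin N, |ν i| * ‖Dop i‖ * M i t := fun t =>
      max_eq_left (Finset.sum_nonneg fun i _ => mul_nonneg (hterm i) (hM_nonneg i t))
    have goal2 : Tendsto (fun t : ℝ => (∑ i : Fin N, |ν i| * ‖Dop i‖ * M i t) / t)
        atTop (nhds 0) := by
      have : Tendsto (fun t : ℝ => ∑ i : Fin N, |ν i| * ‖Dop i‖ * M i t / t)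
          atTop (nhds (∑ _i : Fin N, (0:ℝ))) := by
        refine tendsto_finset_sum _ fun i _ => ?_
        -- show each term tends to 0
        have hMt : Tendsto (fun t : ℝ => M i t / t) atTop (nhds 0) := by
          set F : ℝ → ℝ := fun t => ∫ s in (0:ℝ)..t, |z i (θ s ω)| with hFdef
          have hFint : ∀ a b : ℝ, IntervalIntegrable (fun s => |z i (θ s ω)|) volume a b :=
            fun a b => ((hz_int i ω a).symm.trans (hz_int i ω b)).abs
          -- the key pathwise bound
          have hbound : ∀ t : ℝ, M i t ≤ F (t + T) - F t := by
            intro t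
            refine csSup_le ((Set.nonempty_Icc.2 hT.le).image _) ?_
            rintro x ⟨r, ⟨hr0, hrT⟩, rfl⟩
            have hflow : ∀ s : ℝ, θ s (θ t ω) = θ (s + t) ω := fun s =>
              congrFun (hθ_flow t s) ω
            simp only [hflow]
            rw [intervalIntegral.integral_comp_add_right (fun u => z i (θ u ω)) t, zero_add]
            have h1 : |∫ u in t..(r + t), z i (θ u ω)| ≤
                ∫ u in t..(r + t), |z i (θ u ω)| :=
              intervalIntegral.abs_integral_le_integral_abs (le_add_of_nonneg_left hr0)
            have h2 : (∫ u in t..(r + t), |z i (θ u ω)|) ≤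
                ∫ u in t..(t + T), |z i (θ u ω)| := by
              refine intervalIntegral.integral_mono_interval le_rfl
                (le_add_of_nonneg_left hr0) (by linarith) ?_ (hFint t (t + T))
              exact Eventually.of_forall fun s => abs_nonneg _
            have h3 : (∫ u in t..(t + T), |z i (θ u ω)|) = F (t + T) - F t :=
              (intervalIntegral.integral_interval_sub_left (hFint 0 (t + T))
                (hFint 0 t)).symm
            linarith
          have hEz' : Tendsto (fun t : ℝ => F t / t) atTop (nhds (Ez i)) := hEz ω hω i
          have h1 : Tendsto (fun t : ℝ => F (t + T) / (t + T)) atTop (nhds (Ez i)) :=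
            hEz'.comp (tendsto_atTop_add_const_right atTop T tendsto_id)
          have h2 : Tendsto (fun t : ℝ => (t + T) / t) atTop (nhds 1) := by
            have hA : Tendsto (fun t : ℝ => 1 + T / t) atTop (nhds (1 + 0)) :=
              tendsto_const_nhds.add (tendsto_const_nhds.div_atTop tendsto_id)
            rw [add_zero] at hA
            refine hA.congr' ?_
            filter_upwards [eventually_gt_atTop (0:ℝ)] with t ht
            field_simp
          have h3 : Tendsto (fun t : ℝ => F (t + T) / t) atTop (nhds (Ez i)) := by
            have := h1.mul h2
            rw [mul_one] at this
            refine this.congr' ?_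
            filter_upwards [eventually_gt_atTop (0:ℝ)] with t ht
            have htT : t + T ≠ 0 := by positivity
            field_simp
          have h4 : Tendsto (fun t : ℝ => (F (t + T) - F t) / t) atTop (nhds 0) := by
            have := h3.sub hEz'
            rw [sub_self] at this
            refine this.congr' ?_
            filter_upwards with t
            rw [sub_div]
          refine tendsto_of_tendsto_of_tendsto_of_le_of_le' tendsto_const_nhds h4 ?_ ?_
          · filter_upwards [eventually_gt_atTop (0:ℝ)] with t ht
            exact div_nonneg (hM_nonneg i t) ht.le
          · filter_upwards [eventually_gt_atTop (0:ℝ)] with t ht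
            exact (div_le_div_iff_of_pos_right ht).2 (hbound t)
        have := Filter.Tendsto.const_mul (|ν i| * ‖Dop i‖) hMt
        rw [mul_zero] at this
        refine this.congr fun t => ?_
        rw [mul_div_assoc]
      simp only [Finset.sum_const, smul_zero] at this
      exact this.congr fun t => (Finset.sum_div _ _ _).symm
    refine goal2.congr fun t => ?_
    rw [hmax t]
end
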